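/- arXiv:1405.0542 — 5 statements merged into one kernel-verified Lean document; each statement's English description precedes it below -/
import Mathlib

section
/- For all t in the open interval (-π/2, π/2), the function ξ(t) = (cos²t + 2t·sin t·cos t + t² − π²/4)/cos²t is nonpositive, i.e. cos²t + 2t·sin t·cos t + t² ≤ π²/4. -/
open Real

lemma xi_aux (t : ℝ) (h0 : 0 ≤ t) (h1 : t < π/2) :
    Real.cos t ^ 2 + 2 * t * Real.sin t * Real.cos t + t ^ 2 ≤ π ^ 2 / 4 := by
  have hs : 0 < π/2 - t := by linarith
  have hcos0 : 0 ≤ Real.cos t := Real.cos_nonneg_of_mem_Icc ⟨by linarith [Real.pi_pos], h1.le⟩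
  have hcosle : Real.cos t ≤ π/2 - t := by
    have := Real.sin_lt hs
    rw [Real.sin_pi_div_two_sub] at this
    linarith
  have hsin0 : 0 ≤ Real.sin t := Real.sin_nonneg_of_nonneg_of_le_pi h0 (by linarith [Real.pi_pos])
  have hsin1 : Real.sin t ≤ 1 := Real.sin_le_one t
  nlinarith [mul_nonneg h0 hcos0, mul_nonneg h0 hsin0, sq_nonneg (Real.cos t - (π/2 - t))]

theorem xi_nonpos (t : ℝ) (ht : t ∈ Set.Ioo (-(π/2)) (π/2)) :
    Real.cos t ^ 2 + 2 * t * Real.sin t * Real.cos t + t ^ 2 ≤ π ^ 2 / 4 := by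
  obtain ⟨h1, h2⟩ := ht
  rcases le_or_gt 0 t with h | h
  · exact xi_aux t h h2
  · have := xi_aux (-t) (by linarith) (by linarith)
    rw [Real.cos_neg, Real.sin_neg] at this
    nlinarith [this]
end

section
/- For all t in (-π/2, π/2), the function ξ(t) = (cos²t + 2t·sin t·cos t + t² − π²/4)/cos²t satisfies ξ'(t)·sin t ≥ 0; equivalently, ξ is nondecreasing on [0, π/2) and nonincreasing on (−π/2, 0]. -/
open Real

noncomputable def xi (t : ℝ) : ℝ :=
  (Real.cos t ^ 2 + 2 * t * Real.sin t * Real.cos t + t ^ 2 - π ^ 2 / 4) / Real.cos t ^ 2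

namespace XiAux

/-- The auxiliary function `h` whose monotonicity encodes the key inequality. -/
noncomputable def haux (x : ℝ) : ℝ := x ^ 2 + 2 * x * Real.cos x / Real.sin x + Real.cos x ^ 2

lemma haux_hasDerivAt (x : ℝ) (hs : Real.sin x ≠ 0) :
    HasDerivAt haux
      (2 * x + (2 * Real.cos x * Real.sin x - 2 * x) / Real.sin x ^ 2
        - 2 * Real.sin x * Real.cos x) x := by
  have h1 : HasDerivAt (fun y : ℝ => y ^ 2) (2 * x) x := by
    simpa using (hasDerivAt_pow 2 x)
  have h2 : HasDerivAt (fun y : ℝ => 2 * y * Real.cos y) (2 * Real.cos x + 2 * x * (-Real.sin x)) x := by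
    have := ((hasDerivAt_id x).const_mul 2).mul (Real.hasDerivAt_cos x)
    exact this.congr_deriv (by simp only [id_eq]; ring)
  have h3 : HasDerivAt (fun y : ℝ => 2 * y * Real.cos y / Real.sin y)
      ((2 * Real.cos x * Real.sin x - 2 * x) / Real.sin x ^ 2) x := by
    have := h2.div (Real.hasDerivAt_sin x) hs
    refine this.congr_deriv ?_
    field_simp
    linear_combination (-x) * (Real.sin_sq_add_cos_sq x)
  have h4 : HasDerivAt (fun y : ℝ => Real.cos y ^ 2) (-(2 * Real.sin x * Real.cos x)) x := by
    have := (Real.hasDerivAt_cos x).pow 2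
    refine this.congr_deriv ?_
    ring
  have := (h1.add h3).add h4
  exact this.congr_deriv (by ring)

lemma key_half (t : ℝ) (ht0 : 0 ≤ t) (ht1 : t < π / 2) :
    0 ≤ Real.sin t ^ 2 * Real.cos t ^ 2 + 2 * t * Real.sin t * Real.cos t
        + Real.sin t ^ 2 * (t ^ 2 - π ^ 2 / 4) := by
  rcases eq_or_lt_of_le ht0 with h0 | h0
  · simp [← h0]
  have hpi : (0:ℝ) < π := Real.pi_pos
  have hsin : ∀ x ∈ Set.Icc t (π / 2), 0 < Real.sin x := by
    intro x hx
    exact Real.sin_pos_of_pos_of_lt_pi (lt_of_lt_of_le h0 hx.1)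
      (lt_of_le_of_lt hx.2 (by linarith))
  -- h is antitone on [t, π/2]
  have hanti : AntitoneOn haux (Set.Icc t (π / 2)) := by
    apply antitoneOn_of_deriv_nonpos (convex_Icc _ _)
    · apply ContinuousOn.add
      apply ContinuousOn.add
      · exact (continuous_pow 2).continuousOn
      · exact ContinuousOn.div
          (Continuous.continuousOn (by continuity))
          Real.continuous_sin.continuousOn
          (fun x hx => (hsin x hx).ne')
      · exact (Real.continuous_cos.pow 2).continuousOn
    · intro x hx
      rw [interior_Icc] at hx
      exact (haux_hasDerivAt x (hsin x (Set.mem_Icc_of_Ioo hx)).ne').differentiableAt.differentiableWithinAt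
    · intro x hx
      rw [interior_Icc] at hx
      have hsx : 0 < Real.sin x := hsin x (Set.mem_Icc_of_Ioo hx)
      rw [(haux_hasDerivAt x hsx.ne').deriv]
      have hxpos : 0 < x := lt_of_lt_of_le h0 hx.1.le
      have hsc : Real.sin x * Real.cos x ≤ x := by
        have := Real.sin_le (by linarith : (0:ℝ) ≤ 2 * x)
        rw [Real.sin_two_mul] at this
        linarith
      have hs2 : 0 < Real.sin x ^ 2 := by positivity
      have key : 2 * x + (2 * Real.cos x * Real.sin x - 2 * x) / Real.sin x ^ 2
          - 2 * Real.sin x * Real.cos x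
          = (2 * Real.cos x ^ 2 * (Real.sin x * Real.cos x - x)) / Real.sin x ^ 2 := by
        field_simp
        linear_combination (x - Real.sin x * Real.cos x) * (Real.sin_sq_add_cos_sq x)
      rw [key]
      apply div_nonpos_of_nonpos_of_nonneg _ hs2.le
      nlinarith [sq_nonneg (Real.cos x)]
  have hmem_t : t ∈ Set.Icc t (π / 2) := ⟨le_refl _, by linarith⟩
  have hmem_pi : (π / 2) ∈ Set.Icc t (π / 2) := ⟨by linarith, le_refl _⟩
  have hge : haux (π / 2) ≤ haux t := hanti hmem_t hmem_pi (by linarith)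
  have hval : haux (π / 2) = π ^ 2 / 4 := by
    simp [haux, Real.cos_pi_div_two, Real.sin_pi_div_two]
    ring
  rw [hval] at hge
  have hst : 0 < Real.sin t := hsin t hmem_t
  have heq : Real.sin t ^ 2 * Real.cos t ^ 2 + 2 * t * Real.sin t * Real.cos t
        + Real.sin t ^ 2 * (t ^ 2 - π ^ 2 / 4)
      = Real.sin t ^ 2 * (haux t - π ^ 2 / 4) := by
    rw [haux]
    field_simp
    ring
  rw [heq]
  have : 0 ≤ haux t - π ^ 2 / 4 := by linarith
  positivity

lemma key (t : ℝ) (ht : t ∈ Set.Ioo (-(π/2)) (π/2)) :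
    0 ≤ Real.sin t ^ 2 * Real.cos t ^ 2 + 2 * t * Real.sin t * Real.cos t
        + Real.sin t ^ 2 * (t ^ 2 - π ^ 2 / 4) := by
  rcases le_or_gt 0 t with h | h
  · exact key_half t h ht.2
  · have := key_half (-t) (by linarith) (by have := ht.1; linarith)
    simp only [Real.sin_neg, Real.cos_neg, neg_neg] at this
    nlinarith [this]

lemma xi_hasDerivAt (t : ℝ) (hc : Real.cos t ≠ 0) :
    HasDerivAt xi
      ((4 * t * Real.cos t ^ 2 * Real.cos t ^ 2 + 2 * Real.sin t * Real.cos t *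
        (Real.cos t ^ 2 + 2 * t * Real.sin t * Real.cos t + t ^ 2 - π ^ 2 / 4))
        / (Real.cos t ^ 2) ^ 2) t := by
  have hcos2 : HasDerivAt (fun y : ℝ => Real.cos y ^ 2) (-(2 * Real.sin t * Real.cos t)) t := by
    have := (Real.hasDerivAt_cos t).pow 2
    refine this.congr_deriv ?_; ring
  have hnum : HasDerivAt (fun y : ℝ => Real.cos y ^ 2 + 2 * y * Real.sin y * Real.cos y + y ^ 2 - π ^ 2 / 4)
      (4 * t * Real.cos t ^ 2) t := by
    have h2 : HasDerivAt (fun y : ℝ => 2 * y * Real.sin y * Real.cos y)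
        ((2 * Real.sin t + 2 * t * Real.cos t) * Real.cos t + 2 * t * Real.sin t * (-Real.sin t)) t := by
      have ha : HasDerivAt (fun y : ℝ => 2 * y * Real.sin y) (2 * Real.sin t + 2 * t * Real.cos t) t := by
        have := ((hasDerivAt_id t).const_mul 2).mul (Real.hasDerivAt_sin t)
        exact this.congr_deriv (by simp only [id_eq]; ring)
      exact ha.mul (Real.hasDerivAt_cos t)
    have h3 : HasDerivAt (fun y : ℝ => y ^ 2) (2 * t) t := by simpa using hasDerivAt_pow 2 t
    have := ((hcos2.add h2).add h3).sub_const (π ^ 2 / 4)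
    refine this.congr_deriv ?_
    linear_combination (-(2 * t)) * (Real.sin_sq_add_cos_sq t)
  have hc2 : Real.cos t ^ 2 ≠ 0 := pow_ne_zero 2 hc
  have := hnum.div hcos2 hc2
  refine this.congr_deriv ?_
  field_simp
  ring

lemma deriv_sin_nonneg (t : ℝ) (ht : t ∈ Set.Ioo (-(π/2)) (π/2)) :
    deriv xi t * Real.sin t ≥ 0 := by
  have hc : 0 < Real.cos t := Real.cos_pos_of_mem_Ioo ht
  rw [(xi_hasDerivAt t hc.ne').deriv]
  rw [div_mul_eq_mul_div, ge_iff_le, le_div_iff₀ (by positivity)]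
  have hP := key t ht
  have heq : (4 * t * Real.cos t ^ 2 * Real.cos t ^ 2 + 2 * Real.sin t * Real.cos t *
        (Real.cos t ^ 2 + 2 * t * Real.sin t * Real.cos t + t ^ 2 - π ^ 2 / 4)) * Real.sin t
      = 2 * Real.cos t * (Real.sin t ^ 2 * Real.cos t ^ 2 + 2 * t * Real.sin t * Real.cos t
        + Real.sin t ^ 2 * (t ^ 2 - π ^ 2 / 4)) := by
    linear_combination (4 * t * Real.sin t * Real.cos t ^ 2) * (Real.sin_sq_add_cos_sq t)
  rw [heq]
  have h2 : (0:ℝ) ≤ 2 * Real.cos t := by linarith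
  nlinarith [mul_nonneg h2 hP]

end XiAux

theorem xi_deriv_sin_nonneg :
    (∀ t ∈ Set.Ioo (-(π/2)) (π/2), deriv xi t * Real.sin t ≥ 0) ∧
    MonotoneOn xi (Set.Ico 0 (π/2)) ∧ AntitoneOn xi (Set.Ioc (-(π/2)) 0) := by
  have hpi : (0:ℝ) < π := Real.pi_pos
  have hcont : ∀ s : Set ℝ, s ⊆ Set.Ioo (-(π/2)) (π/2) → ContinuousOn xi s := by
    intro s hs
    apply ContinuousOn.div
    · exact Continuous.continuousOn (by continuity)
    · exact (Real.continuous_cos.pow 2).continuousOn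
    · intro x hx
      exact pow_ne_zero 2 (Real.cos_pos_of_mem_Ioo (hs hx)).ne'
  refine ⟨XiAux.deriv_sin_nonneg, ?_, ?_⟩
  · apply monotoneOn_of_deriv_nonneg (convex_Ico _ _)
    · exact hcont _ (fun x hx => ⟨by have := hx.1; linarith, hx.2⟩)
    · intro x hx
      rw [interior_Ico] at hx
      have hc : Real.cos x ≠ 0 :=
        (Real.cos_pos_of_mem_Ioo ⟨by have := hx.1; linarith, hx.2⟩).ne'
      exact (XiAux.xi_hasDerivAt x hc).differentiableAt.differentiableWithinAt
    · intro x hx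
      rw [interior_Ico] at hx
      have hxm : x ∈ Set.Ioo (-(π/2)) (π/2) := ⟨by have := hx.1; linarith, hx.2⟩
      have h1 := XiAux.deriv_sin_nonneg x hxm
      have hs : 0 < Real.sin x :=
        Real.sin_pos_of_pos_of_lt_pi hx.1 (lt_trans hx.2 (by linarith))
      nlinarith [h1]
  · apply antitoneOn_of_deriv_nonpos (convex_Ioc _ _)
    · exact hcont _ (fun x hx => ⟨hx.1, by have := hx.2; linarith⟩)
    · intro x hx
      rw [interior_Ioc] at hx
      have hc : Real.cos x ≠ 0 :=
        (Real.cos_pos_of_mem_Ioo ⟨hx.1, by have := hx.2; linarith⟩).ne'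
      exact (XiAux.xi_hasDerivAt x hc).differentiableAt.differentiableWithinAt
    · intro x hx
      rw [interior_Ioc] at hx
      have hxm : x ∈ Set.Ioo (-(π/2)) (π/2) := ⟨hx.1, by have := hx.2; linarith⟩
      have h1 := XiAux.deriv_sin_nonneg x hxm
      have hs : Real.sin x < 0 := by
        have : 0 < Real.sin (-x) :=
          Real.sin_pos_of_pos_of_lt_pi (by linarith [hx.2]) (by have := hx.1; linarith)
        rw [Real.sin_neg] at this; linarith
      nlinarith [h1]
end

section
/- The function ξ(t) = (cos²t + 2t·sin t·cos t + t² − π²/4)/cos²t attains its minimum on (-π/2, π/2) at t = 0, with minimum value ξ(0) = 1 − π²/4; hence 1 − π²/4 ≤ ξ(t) ≤ 0 for all t in (-π/2, π/2). -/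
open Real

noncomputable def hfun (t : ℝ) : ℝ :=
  Real.cos t ^ 2 + 2 * t * Real.sin t * Real.cos t + t ^ 2

noncomputable def psi (t : ℝ) : ℝ :=
  (t ^ 2 + 2 * t * Real.sin t * Real.cos t) / Real.sin t ^ 2

lemma hfun_hasDeriv (t : ℝ) : HasDerivAt hfun (4 * t * Real.cos t ^ 2) t := by
  have hs := Real.hasDerivAt_sin t
  have hc := Real.hasDerivAt_cos t
  have h1 : HasDerivAt (fun x : ℝ => Real.cos x ^ 2)
      (2 * Real.cos t ^ 1 * (-Real.sin t)) t := hc.pow 2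
  have hid : HasDerivAt (fun x : ℝ => 2 * x) 2 t := by
    simpa using (hasDerivAt_id t).const_mul 2
  have h2 : HasDerivAt (fun x : ℝ => 2 * x * Real.sin x * Real.cos x)
      (((2 * Real.sin t + 2 * t * Real.cos t) * Real.cos t)
        + (2 * t * Real.sin t) * (-Real.sin t)) t := by
    exact ((hid.mul hs).mul hc)
  have h3 : HasDerivAt (fun x : ℝ => x ^ 2) (2 * t ^ 1) t := hasDerivAt_pow 2 t
  have := (h1.add h2).add h3
  have hpy := Real.sin_sq_add_cos_sq t
  refine this.congr_deriv ?_
  linear_combination (-(2*t)) * hpy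

lemma psi_hasDeriv (t : ℝ) (hs : Real.sin t ≠ 0) :
    HasDerivAt psi (2 * Real.cos t * (Real.sin t ^ 2 - t ^ 2) / Real.sin t ^ 3) t := by
  have hsd := Real.hasDerivAt_sin t
  have hcd := Real.hasDerivAt_cos t
  have hid : HasDerivAt (fun x : ℝ => 2 * x) 2 t := by
    simpa using (hasDerivAt_id t).const_mul 2
  have hnum : HasDerivAt (fun x : ℝ => x ^ 2 + 2 * x * Real.sin x * Real.cos x)
      ((2 * t ^ 1) + (((2 * Real.sin t + 2 * t * Real.cos t) * Real.cos t)
        + (2 * t * Real.sin t) * (-Real.sin t))) t :=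
    (hasDerivAt_pow 2 t).add ((hid.mul hsd).mul hcd)
  have hden : HasDerivAt (fun x : ℝ => Real.sin x ^ 2)
      (2 * Real.sin t ^ 1 * Real.cos t) t := hsd.pow 2
  have hden_ne : Real.sin t ^ 2 ≠ 0 := pow_ne_zero _ hs
  have := hnum.div hden hden_ne
  refine this.congr_deriv ?_
  have hpy := Real.sin_sq_add_cos_sq t
  field_simp
  linear_combination (-(t*Real.sin t)) * hpy

lemma xi_neg (t : ℝ) : xi (-t) = xi t := by
  unfold xi
  rw [Real.cos_neg, Real.sin_neg]
  ring_nf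

lemma key (t : ℝ) (h0 : 0 ≤ t) (h1 : t < π / 2) :
    1 - π ^ 2 / 4 ≤ xi t ∧ xi t ≤ 0 := by
  have hpi := Real.pi_pos
  have hcpos : 0 < Real.cos t :=
    Real.cos_pos_of_mem_Ioo ⟨by linarith, h1⟩
  have hc2 : (0 : ℝ) < Real.cos t ^ 2 := by positivity
  -- upper bound
  have hmono : StrictMonoOn hfun (Set.Icc 0 (π / 2)) := by
    apply strictMonoOn_of_deriv_pos (convex_Icc _ _)
    · have : Continuous hfun := by unfold hfun; continuity
      exact this.continuousOn
    · intro x hx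
      rw [interior_Icc] at hx
      rw [(hfun_hasDeriv x).deriv]
      have hcx : 0 < Real.cos x :=
        Real.cos_pos_of_mem_Ioo ⟨by linarith [hx.1], hx.2⟩
      have := hx.1
      positivity
  have hht : hfun t < hfun (π / 2) := by
    apply hmono ⟨h0, le_of_lt h1⟩ ⟨by linarith, le_refl _⟩ h1
  have hhval : hfun (π / 2) = π ^ 2 / 4 := by
    unfold hfun
    rw [Real.cos_pi_div_two, Real.sin_pi_div_two]
    ring
  rw [hhval] at hht
  have hupper : xi t ≤ 0 := by
    unfold xi
    apply div_nonpos_of_nonpos_of_nonneg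
    · unfold hfun at hht; linarith
    · positivity
  refine ⟨?_, hupper⟩
  -- lower bound
  rcases eq_or_lt_of_le h0 with heq | hpos
  · subst heq
    unfold xi
    simp
  · have hsinpos : ∀ x ∈ Set.Icc t (π / 2), 0 < Real.sin x := by
      intro x hx
      exact Real.sin_pos_of_pos_of_lt_pi (lt_of_lt_of_le hpos hx.1)
        (lt_of_le_of_lt hx.2 (by linarith))
    have hanti : StrictAntiOn psi (Set.Icc t (π / 2)) := by
      apply strictAntiOn_of_deriv_neg (convex_Icc _ _)
      · apply ContinuousOn.div
        · fun_prop
        · fun_prop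
        · intro x hx
          exact pow_ne_zero _ (ne_of_gt (hsinpos x hx))
      · intro x hx
        rw [interior_Icc] at hx
        have hxpos : 0 < x := lt_trans hpos hx.1
        have hsx : 0 < Real.sin x := hsinpos x ⟨le_of_lt hx.1, le_of_lt hx.2⟩
        have hcx : 0 < Real.cos x :=
          Real.cos_pos_of_mem_Ioo ⟨by linarith, hx.2⟩
        have hslt : Real.sin x < x := Real.sin_lt hxpos
        rw [(psi_hasDeriv x (ne_of_gt hsx)).deriv]
        apply div_neg_of_neg_of_pos
        · have : Real.sin x ^ 2 < x ^ 2 := by nlinarith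
          nlinarith
        · positivity
    have hpt : psi (π / 2) < psi t :=
      hanti ⟨le_refl _, le_of_lt h1⟩ ⟨le_of_lt h1, le_refl _⟩ h1
    have hpv : psi (π / 2) = π ^ 2 / 4 := by
      unfold psi
      rw [Real.cos_pi_div_two, Real.sin_pi_div_two]
      ring
    rw [hpv] at hpt
    have hst : 0 < Real.sin t := hsinpos t ⟨le_refl _, le_of_lt h1⟩
    have hs2 : (0 : ℝ) < Real.sin t ^ 2 := by positivity
    have hineq : π ^ 2 / 4 * Real.sin t ^ 2 ≤ t ^ 2 + 2 * t * Real.sin t * Real.cos t := by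
      have := hpt.le
      unfold psi at this
      rw [le_div_iff₀ hs2] at this
      linarith
    have hpy := Real.sin_sq_add_cos_sq t
    unfold xi
    rw [le_div_iff₀ hc2]
    nlinarith

theorem xi_min_at_zero :
    xi 0 = 1 - π ^ 2 / 4 ∧
    ∀ t ∈ Set.Ioo (-(π/2)) (π/2), 1 - π ^ 2 / 4 ≤ xi t ∧ xi t ≤ 0 := by
  constructor
  · unfold xi; simp
  · intro t ht
    rcases le_or_gt 0 t with h | h
    · exact key t h ht.2
    · have h1 : -t < π / 2 := by linarith [ht.1]
      have := key (-t) (by linarith) h1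
      rwa [xi_neg] at this
end

section
/- The integral of ξ(t) = (cos²t + 2t·sin t·cos t + t² − π²/4)/cos²t over the interval (−π/2, π/2) equals −π. -/
open Real

-- cos is nonzero near a = ±π/2 except at a itself
lemma cos_ne_zero_near (a : ℝ) (ha : a = π / 2 ∨ a = -(π / 2)) :
    ∀ᶠ x in nhdsWithin a {a}ᶜ, Real.cos x ≠ 0 := by
  have h1 : {x : ℝ | |x - a| < 1} ∈ nhdsWithin a {a}ᶜ := by
    apply nhdsWithin_le_nhds
    have : Metric.ball a 1 ∈ nhds a := Metric.ball_mem_nhds a one_pos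
    simpa [Metric.ball, Real.dist_eq] using this
  have h2 : {a}ᶜ ∈ nhdsWithin a {a}ᶜ := self_mem_nhdsWithin
  filter_upwards [h1, h2] with x hx hx'
  intro hcos
  rw [Real.cos_eq_zero_iff] at hcos
  obtain ⟨k, hk⟩ := hcos
  have hpi : π ≥ 3 := by linarith [Real.pi_gt_three]
  rcases ha with ha | ha
  · have hxa : x - a = (k : ℝ) * π := by rw [hk, ha]; ring
    have hk0 : k ≠ 0 := by
      intro h; apply hx'
      simp only [Set.mem_compl_iff, Set.mem_singleton_iff, not_not]
      have h0 : ((k : ℤ) : ℝ) = 0 := by exact_mod_cast h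
      rw [h0] at hxa; linarith
    have h1 : (1 : ℝ) ≤ |((k : ℤ) : ℝ)| := by
      rw [← Int.cast_abs]; exact_mod_cast Int.one_le_abs hk0
    have h2 : |x - a| = |((k : ℤ) : ℝ)| * π := by
      rw [hxa, abs_mul, abs_of_pos Real.pi_pos]
    nlinarith
  · have hxa : x - a = ((k + 1 : ℤ) : ℝ) * π := by rw [hk, ha]; push_cast; ring
    have hk0 : k + 1 ≠ 0 := by
      intro h; apply hx'
      simp only [Set.mem_compl_iff, Set.mem_singleton_iff, not_not]
      have h0 : ((k + 1 : ℤ) : ℝ) = 0 := by exact_mod_cast h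
      rw [h0] at hxa; linarith
    have h1 : (1 : ℝ) ≤ |((k + 1 : ℤ) : ℝ)| := by
      rw [← Int.cast_abs]; exact_mod_cast Int.one_le_abs hk0
    have h2 : |x - a| = |((k + 1 : ℤ) : ℝ)| * π := by
      rw [hxa, abs_mul, abs_of_pos Real.pi_pos]
    nlinarith

lemma xi_tendsto (a : ℝ) (ha : a = π / 2 ∨ a = -(π / 2)) :
    Filter.Tendsto xi (nhdsWithin a {a}ᶜ) (nhds 0) := by
  have hcosa : Real.cos a = 0 := by rcases ha with h | h <;> simp [h, Real.cos_pi_div_two]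
  have hsina : Real.sin a ≠ 0 := by
    rcases ha with h | h <;> simp [h]
  have hcos := cos_ne_zero_near a ha
  have hN : ∀ x : ℝ, HasDerivAt
      (fun t => Real.cos t ^ 2 + 2 * t * Real.sin t * Real.cos t + t ^ 2 - π ^ 2 / 4)
      (4 * x * Real.cos x ^ 2) x := by
    intro x
    have h1 : HasDerivAt (fun t : ℝ => Real.cos t ^ 2) (2 * Real.cos x * (-Real.sin x)) x := by
      simpa using ((Real.hasDerivAt_cos x).fun_pow 2)
    have h2 : HasDerivAt (fun t : ℝ => 2 * t * Real.sin t * Real.cos t)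
        ((2 * Real.sin x + 2 * x * Real.cos x) * Real.cos x + 2 * x * Real.sin x * (-Real.sin x)) x := by
      have := (((hasDerivAt_id x).const_mul 2).mul (Real.hasDerivAt_sin x)).mul (Real.hasDerivAt_cos x)
      refine this.congr_deriv ?_
      simp only [Pi.mul_apply, id_eq]
      ring
    have h3 : HasDerivAt (fun t : ℝ => t ^ 2) (2 * x) x := by
      simpa using hasDerivAt_pow 2 x
    have := ((h1.add h2).add h3).sub_const (π ^ 2 / 4)
    refine this.congr_deriv (Eq.symm ?_)
    linear_combination (2 * x) * Real.sin_sq_add_cos_sq x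
  have hD : ∀ x : ℝ, HasDerivAt (fun t : ℝ => Real.cos t ^ 2)
      (-(2 * Real.sin x * Real.cos x)) x := by
    intro x
    have := (Real.hasDerivAt_cos x).fun_pow 2
    refine this.congr_deriv ?_; ring
  have hsin_ev : ∀ᶠ x in nhdsWithin a {a}ᶜ, Real.sin x ≠ 0 :=
    (Real.continuous_sin.continuousAt.eventually_ne hsina).filter_mono nhdsWithin_le_nhds
  have key : Filter.Tendsto
      (fun x => (Real.cos x ^ 2 + 2 * x * Real.sin x * Real.cos x + x ^ 2 - π ^ 2 / 4) /
        Real.cos x ^ 2) (nhdsWithin a {a}ᶜ) (nhds 0) := by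
    apply HasDerivAt.lhopital_zero_nhdsNE
      (f' := fun x => 4 * x * Real.cos x ^ 2) (g' := fun x => -(2 * Real.sin x * Real.cos x))
    · filter_upwards with x using hN x
    · filter_upwards with x using hD x
    · filter_upwards [hcos, hsin_ev] with x hx hsin
      simp only [neg_ne_zero]
      exact mul_ne_zero (mul_ne_zero two_ne_zero hsin) hx
    · -- numerator tends to 0
      have : Filter.Tendsto
          (fun x => Real.cos x ^ 2 + 2 * x * Real.sin x * Real.cos x + x ^ 2 - π ^ 2 / 4)
          (nhds a) (nhds (Real.cos a ^ 2 + 2 * a * Real.sin a * Real.cos a + a ^ 2 - π ^ 2 / 4)) := by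
        apply Continuous.tendsto
        continuity
      have h0 : Real.cos a ^ 2 + 2 * a * Real.sin a * Real.cos a + a ^ 2 - π ^ 2 / 4 = 0 := by
        rw [hcosa]
        rcases ha with h | h <;> rw [h] <;> ring
      rw [h0] at this
      exact this.mono_left nhdsWithin_le_nhds
    · have : Filter.Tendsto (fun x => Real.cos x ^ 2) (nhds a) (nhds (Real.cos a ^ 2)) := by
        apply Continuous.tendsto; continuity
      rw [hcosa] at this; norm_num at this
      exact this.mono_left nhdsWithin_le_nhds
    · -- f'/g' tends to 0
      have heq : ∀ᶠ x in nhdsWithin a {a}ᶜ,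
          (4 * x * Real.cos x ^ 2) / (-(2 * Real.sin x * Real.cos x)) =
          -(2 * x * Real.cos x) / Real.sin x := by
        filter_upwards [hcos, hsin_ev] with x hx hsin
        field_simp
        ring
      rw [Filter.tendsto_congr' heq]
      have : Filter.Tendsto (fun x => -(2 * x * Real.cos x) / Real.sin x) (nhds a)
          (nhds (-(2 * a * Real.cos a) / Real.sin a)) := by
        apply Filter.Tendsto.div
        · apply Continuous.tendsto; continuity
        · exact (Real.continuous_sin.tendsto a)
        · exact hsina
      rw [hcosa] at this
      norm_num at this
      exact this.mono_left nhdsWithin_le_nhds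
  exact key

lemma F_tendsto (a : ℝ) (ha : a = π / 2 ∨ a = -(π / 2)) :
    Filter.Tendsto (fun t => t + (t ^ 2 - π ^ 2 / 4) * Real.tan t)
      (nhdsWithin a {a}ᶜ) (nhds (a - π * Real.sin a)) := by
  have hcosa : Real.cos a = 0 := by rcases ha with h | h <;> simp [h]
  have hsina : Real.sin a ≠ 0 := by rcases ha with h | h <;> simp [h]
  have hcos := cos_ne_zero_near a ha
  -- (t^2 - π^2/4)/cos t → -π by L'Hôpital
  have hquot : Filter.Tendsto (fun t => (t ^ 2 - π ^ 2 / 4) / Real.cos t)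
      (nhdsWithin a {a}ᶜ) (nhds (-π)) := by
    apply HasDerivAt.lhopital_zero_nhdsNE
      (f' := fun x => 2 * x) (g' := fun x => -Real.sin x)
    · filter_upwards with x
      simpa using (hasDerivAt_pow 2 x).sub_const (π ^ 2 / 4)
    · filter_upwards with x using Real.hasDerivAt_cos x
    · have : ∀ᶠ x in nhds a, Real.sin x ≠ 0 :=
        (Real.continuous_sin.continuousAt).eventually_ne hsina
      filter_upwards [this.filter_mono nhdsWithin_le_nhds] with x hx
      simpa using hx
    · have : Filter.Tendsto (fun t : ℝ => t ^ 2 - π ^ 2 / 4) (nhds a)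
          (nhds (a ^ 2 - π ^ 2 / 4)) := by apply Continuous.tendsto; continuity
      have h0 : a ^ 2 - π ^ 2 / 4 = 0 := by rcases ha with h | h <;> rw [h] <;> ring
      rw [h0] at this
      exact this.mono_left nhdsWithin_le_nhds
    · have := Real.continuous_cos.tendsto a
      rw [hcosa] at this
      exact this.mono_left nhdsWithin_le_nhds
    · have : Filter.Tendsto (fun x => 2 * x / (-Real.sin x)) (nhds a)
          (nhds (2 * a / (-Real.sin a))) := by
        apply Filter.Tendsto.div
        · apply Continuous.tendsto; continuity
        · exact (Real.continuous_sin.tendsto a).neg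
        · simpa using hsina
      have h0 : 2 * a / (-Real.sin a) = -π := by
        rcases ha with h | h <;> rw [h] <;> simp <;> ring
      rw [h0] at this
      exact this.mono_left nhdsWithin_le_nhds
  have heq : ∀ᶠ t in nhdsWithin a {a}ᶜ,
      t + (t ^ 2 - π ^ 2 / 4) * Real.tan t =
      t + Real.sin t * ((t ^ 2 - π ^ 2 / 4) / Real.cos t) := by
    filter_upwards [hcos] with t ht
    rw [Real.tan_eq_sin_div_cos]
    field_simp
  rw [Filter.tendsto_congr' heq]
  have h1 : Filter.Tendsto (fun t : ℝ => t) (nhdsWithin a {a}ᶜ) (nhds a) :=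
    (continuous_id.tendsto a).mono_left nhdsWithin_le_nhds
  have h2 : Filter.Tendsto Real.sin (nhdsWithin a {a}ᶜ) (nhds (Real.sin a)) :=
    (Real.continuous_sin.tendsto a).mono_left nhdsWithin_le_nhds
  have := h1.add (h2.mul hquot)
  convert this using 1
  ring_nf

theorem xi_integral : ∫ t in (-(π/2))..(π/2), xi t = -π := by
  have hab : -(π / 2) < π / 2 := by linarith [Real.pi_pos]
  have hderiv : ∀ x ∈ Set.Ioo (-(π / 2)) (π / 2),
      HasDerivAt (fun t => t + (t ^ 2 - π ^ 2 / 4) * Real.tan t) (xi x) x := by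
    intro x hx
    have hcos : Real.cos x ≠ 0 := (Real.cos_pos_of_mem_Ioo hx).ne'
    have h1 : HasDerivAt (fun t : ℝ => t + (t ^ 2 - π ^ 2 / 4) * Real.tan t)
        (1 + ((2 * x) * Real.tan x + (x ^ 2 - π ^ 2 / 4) * (1 / Real.cos x ^ 2))) x := by
      have hp : HasDerivAt (fun t : ℝ => t ^ 2 - π ^ 2 / 4) (2 * x) x := by
        simpa using (hasDerivAt_pow 2 x).sub_const (π ^ 2 / 4)
      exact (hasDerivAt_id x).add (hp.mul (Real.hasDerivAt_tan hcos))
    convert h1 using 1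
    unfold xi
    rw [Real.tan_eq_sin_div_cos]
    field_simp
    ring
  -- integrability via continuity on Icc
  have hxi_cont : ContinuousOn xi (Set.Icc (-(π / 2)) (π / 2)) := by
    intro x hx
    rcases eq_or_ne x (π / 2) with h | h
    · subst h
      apply ContinuousAt.continuousWithinAt
      rw [ContinuousAt, ← nhdsNE_sup_pure (π / 2), Filter.tendsto_sup]
      have hval : xi (π / 2) = 0 := by
        unfold xi
        simp [Real.cos_pi_div_two]
      rw [hval]
      exact ⟨xi_tendsto (π / 2) (Or.inl rfl), by rw [← hval]; exact tendsto_pure_nhds xi (π / 2)⟩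
    rcases eq_or_ne x (-(π / 2)) with h' | h'
    · subst h'
      apply ContinuousAt.continuousWithinAt
      rw [ContinuousAt, ← nhdsNE_sup_pure (-(π / 2)), Filter.tendsto_sup]
      have hval : xi (-(π / 2)) = 0 := by
        unfold xi
        simp [Real.cos_pi_div_two]
      rw [hval]
      exact ⟨xi_tendsto (-(π / 2)) (Or.inr rfl), by rw [← hval]; exact tendsto_pure_nhds xi (-(π / 2))⟩
    · apply ContinuousAt.continuousWithinAt
      have hx' : x ∈ Set.Ioo (-(π / 2)) (π / 2) :=
        ⟨lt_of_le_of_ne hx.1 (Ne.symm h'), lt_of_le_of_ne hx.2 h⟩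
      have hcos : Real.cos x ≠ 0 := (Real.cos_pos_of_mem_Ioo hx').ne'
      unfold xi
      apply ContinuousAt.div
      · exact Continuous.continuousAt (by continuity)
      · exact Continuous.continuousAt (by continuity)
      · positivity
  have hint : IntervalIntegrable xi MeasureTheory.volume (-(π / 2)) (π / 2) := by
    apply ContinuousOn.intervalIntegrable
    rwa [Set.uIcc_of_le hab.le]
  have ha : Filter.Tendsto (fun t => t + (t ^ 2 - π ^ 2 / 4) * Real.tan t)
      (nhdsWithin (-(π / 2)) (Set.Ioi (-(π / 2)))) (nhds (π / 2)) := by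
    have := F_tendsto (-(π / 2)) (Or.inr rfl)
    have hval : -(π / 2) - π * Real.sin (-(π / 2)) = π / 2 := by
      simp; ring
    rw [hval] at this
    exact this.mono_left (nhdsWithin_mono _ (fun y hy => ne_of_gt hy))
  have hb : Filter.Tendsto (fun t => t + (t ^ 2 - π ^ 2 / 4) * Real.tan t)
      (nhdsWithin (π / 2) (Set.Iio (π / 2))) (nhds (-(π / 2))) := by
    have := F_tendsto (π / 2) (Or.inl rfl)
    have hval : π / 2 - π * Real.sin (π / 2) = -(π / 2) := by
      simp; ring
    rw [hval] at this
    exact this.mono_left (nhdsWithin_mono _ (fun y hy => ne_of_lt hy))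
  have := intervalIntegral.integral_eq_sub_of_hasDerivAt_of_tendsto hab hderiv hint ha hb
  rw [this]
  ring
end

section
/- Let δ ≤ 0 and z(t) = 1 + δ·ξ(t) with ξ(t) = (cos²t + 2t·sin t·cos t + t² − π²/4)/cos²t. Then z satisfies (1/2)·z''(t)·cos²t − z'(t)·cos t·sin t − z(t) = −1 + 2δ·cos²t and z'(t)·sin t ≤ 0 for all t in (-π/2, π/2). -/
open Real

noncomputable def xiD (t : ℝ) : ℝ :=
  (2 * Real.sin t * Real.cos t ^ 2 + 4 * t * Real.cos t
    + 2 * Real.sin t * (t ^ 2 - π ^ 2 / 4)) / Real.cos t ^ 3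

noncomputable def xiDD (t : ℝ) : ℝ :=
  (6 * Real.cos t ^ 2 + 12 * t * Real.sin t * Real.cos t
    + (2 + 4 * Real.sin t ^ 2) * (t ^ 2 - π ^ 2 / 4)) / Real.cos t ^ 4

lemma hasDerivAt_xi {t : ℝ} (hc : Real.cos t ≠ 0) : HasDerivAt xi (xiD t) t := by
  have h2 : HasDerivAt (fun x : ℝ => 2 * x * Real.sin x)
      ((2 * 1) * Real.sin t + 2 * t * Real.cos t) t := by
    exact (((hasDerivAt_id t).const_mul (2:ℝ)).mul (Real.hasDerivAt_sin t))
  have hN : HasDerivAt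
      (fun x : ℝ => Real.cos x ^ 2 + 2 * x * Real.sin x * Real.cos x + x ^ 2 - π ^ 2 / 4)
      ((2 * Real.cos t ^ 1 * (-Real.sin t))
        + (((2 * 1) * Real.sin t + 2 * t * Real.cos t) * Real.cos t
            + 2 * t * Real.sin t * (-Real.sin t))
        + (2 : ℕ) * t ^ 1) t := by
    exact ((((Real.hasDerivAt_cos t).pow 2).add (h2.mul (Real.hasDerivAt_cos t))).add
      (hasDerivAt_pow 2 t)).sub_const (π ^ 2 / 4)
  have hden : HasDerivAt (fun x : ℝ => Real.cos x ^ 2) (2 * Real.cos t ^ 1 * (-Real.sin t)) t :=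
    (Real.hasDerivAt_cos t).pow 2
  have h := hN.div hden (pow_ne_zero 2 hc)
  refine h.congr_deriv ?_
  symm
  unfold xiD
  have hp := Real.sin_sq_add_cos_sq t
  field_simp
  linear_combination (-(8:ℝ) * t * Real.cos t) * hp

lemma hasDerivAt_xiD {t : ℝ} (hc : Real.cos t ≠ 0) : HasDerivAt xiD (xiDD t) t := by
  have hA : HasDerivAt
      (fun x : ℝ => 2 * Real.sin x * Real.cos x ^ 2 + 4 * x * Real.cos x
        + 2 * Real.sin x * (x ^ 2 - π ^ 2 / 4))
      ((2 * Real.cos t * Real.cos t ^ 2 + 2 * Real.sin t * (2 * Real.cos t ^ 1 * (-Real.sin t)))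
        + ((4 * 1) * Real.cos t + 4 * t * (-Real.sin t))
        + (2 * Real.cos t * (t ^ 2 - π ^ 2 / 4) + 2 * Real.sin t * ((2:ℕ) * t ^ 1))) t := by
    have h1 : HasDerivAt (fun x : ℝ => 2 * Real.sin x * Real.cos x ^ 2)
        (2 * Real.cos t * Real.cos t ^ 2 + 2 * Real.sin t * (2 * Real.cos t ^ 1 * (-Real.sin t))) t :=
      ((Real.hasDerivAt_sin t).const_mul 2).mul ((Real.hasDerivAt_cos t).pow 2)
    have h2 : HasDerivAt (fun x : ℝ => 4 * x * Real.cos x)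
        ((4 * 1) * Real.cos t + 4 * t * (-Real.sin t)) t := by
      exact ((hasDerivAt_id t).const_mul (4:ℝ)).mul (Real.hasDerivAt_cos t)
    have h3 : HasDerivAt (fun x : ℝ => 2 * Real.sin x * (x ^ 2 - π ^ 2 / 4))
        (2 * Real.cos t * (t ^ 2 - π ^ 2 / 4) + 2 * Real.sin t * ((2:ℕ) * t ^ 1)) t :=
      ((Real.hasDerivAt_sin t).const_mul 2).mul ((hasDerivAt_pow 2 t).sub_const (π ^ 2 / 4))
    exact (h1.add h2).add h3
  have hden : HasDerivAt (fun x : ℝ => Real.cos x ^ 3) (3 * Real.cos t ^ 2 * (-Real.sin t)) t :=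
    (Real.hasDerivAt_cos t).pow 3
  have h := hA.div hden (pow_ne_zero 3 hc)
  refine h.congr_deriv ?_
  symm
  unfold xiDD
  have hp := Real.sin_sq_add_cos_sq t
  field_simp
  linear_combination (-(8:ℝ) * Real.cos t ^ 2 - 8 * t ^ 2 + 2 * π ^ 2) * hp

-- monotone part: the key inequality for positive t
lemma key_pos {t : ℝ} (h0 : 0 < t) (h2 : t < π / 2) :
    0 ≤ Real.sin t ^ 2 * Real.cos t ^ 2 + 2 * t * Real.sin t * Real.cos t
      + t ^ 2 * Real.sin t ^ 2 - π ^ 2 / 4 * Real.sin t ^ 2 := by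
  have hπ : (0:ℝ) < π := Real.pi_pos
  set H : ℝ → ℝ := fun x => Real.cos x ^ 2 + 2 * x * Real.cos x / Real.sin x + x ^ 2 with hH
  have hsinpos : ∀ x ∈ Set.Icc t (π/2), 0 < Real.sin x := by
    intro x hx
    exact Real.sin_pos_of_pos_of_lt_pi (lt_of_lt_of_le h0 hx.1)
      (lt_of_le_of_lt hx.2 (by linarith))
  have hanti : AntitoneOn H (Set.Icc t (π/2)) := by
    apply antitoneOn_of_hasDerivWithinAt_nonpos (convex_Icc _ _)
      (f' := fun x => (2 * Real.cos x ^ 1 * (-Real.sin x))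
        + (((2 * 1) * Real.cos x + 2 * x * (-Real.sin x)) * Real.sin x
            - 2 * x * Real.cos x * Real.cos x) / Real.sin x ^ 2
        + (2:ℕ) * x ^ 1)
    · apply ContinuousOn.add
      apply ContinuousOn.add
      · exact (Real.continuous_cos.pow 2).continuousOn
      · exact ContinuousOn.div
          (((continuous_const.mul continuous_id).mul Real.continuous_cos).continuousOn)
          Real.continuous_sin.continuousOn
          (fun x hx => ne_of_gt (hsinpos x hx))
      · exact (continuous_pow 2).continuousOn
    · intro x hx
      rw [interior_Icc] at hx
      have hs : Real.sin x ≠ 0 := ne_of_gt (hsinpos x ⟨hx.1.le, hx.2.le⟩)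
      have hmid : HasDerivAt (fun y : ℝ => 2 * y * Real.cos y / Real.sin y)
          ((((2 * 1) * Real.cos x + 2 * x * (-Real.sin x)) * Real.sin x
            - 2 * x * Real.cos x * Real.cos x) / Real.sin x ^ 2) x := by
        have hnum : HasDerivAt (fun y : ℝ => 2 * y * Real.cos y)
            ((2 * 1) * Real.cos x + 2 * x * (-Real.sin x)) x := by
          exact ((hasDerivAt_id x).const_mul (2:ℝ)).mul (Real.hasDerivAt_cos x)
        exact hnum.div (Real.hasDerivAt_sin x) hs
      exact ((((Real.hasDerivAt_cos x).pow 2).add hmid).add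
        (hasDerivAt_pow 2 x)).hasDerivWithinAt
    · intro x hx
      rw [interior_Icc] at hx
      have hx0 : 0 < x := lt_trans h0 hx.1
      have hs : 0 < Real.sin x := hsinpos x ⟨hx.1.le, hx.2.le⟩
      have hcx : 0 < Real.cos x := Real.cos_pos_of_mem_Ioo ⟨by linarith, hx.2⟩
      have hcs : Real.cos x * Real.sin x ≤ x := by
        have h1 : Real.cos x * Real.sin x ≤ Real.sin x :=
          mul_le_of_le_one_left hs.le (Real.cos_le_one x)
        have h2 : Real.sin x < x := Real.sin_lt hx0
        linarith
      have heq : (2 * Real.cos x ^ 1 * (-Real.sin x))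
          + (((2 * 1) * Real.cos x + 2 * x * (-Real.sin x)) * Real.sin x
              - 2 * x * Real.cos x * Real.cos x) / Real.sin x ^ 2
          + (2:ℕ) * x ^ 1
          = 2 * Real.cos x ^ 2 * (Real.cos x * Real.sin x - x) / Real.sin x ^ 2 := by
        have hp := Real.sin_sq_add_cos_sq x
        field_simp
        ring_nf
        nlinarith [hp]
      rw [heq]
      apply div_nonpos_of_nonpos_of_nonneg _ (sq_nonneg _)
      have : Real.cos x * Real.sin x - x ≤ 0 := by linarith
      nlinarith [sq_nonneg (Real.cos x)]
  have hmem1 : t ∈ Set.Icc t (π/2) := ⟨le_refl t, h2.le⟩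
  have hmem2 : π/2 ∈ Set.Icc t (π/2) := ⟨h2.le, le_refl _⟩
  have hkey : H (π/2) ≤ H t := hanti hmem1 hmem2 h2.le
  have hH2 : H (π/2) = π ^ 2 / 4 := by
    simp [hH, Real.cos_pi_div_two, Real.sin_pi_div_two]
    ring
  have hst : 0 < Real.sin t := Real.sin_pos_of_pos_of_lt_pi h0 (by linarith)
  have hGH : Real.sin t ^ 2 * Real.cos t ^ 2 + 2 * t * Real.sin t * Real.cos t
      + t ^ 2 * Real.sin t ^ 2 - π ^ 2 / 4 * Real.sin t ^ 2
      = Real.sin t ^ 2 * (H t - π ^ 2 / 4) := by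
    rw [hH]
    field_simp
  rw [hGH]
  have : π ^ 2 / 4 ≤ H t := hH2 ▸ hkey
  nlinarith [sq_nonneg (Real.sin t)]

lemma key_ineq {t : ℝ} (ht : t ∈ Set.Ioo (-(π/2)) (π/2)) :
    0 ≤ Real.sin t ^ 2 * Real.cos t ^ 2 + 2 * t * Real.sin t * Real.cos t
      + t ^ 2 * Real.sin t ^ 2 - π ^ 2 / 4 * Real.sin t ^ 2 := by
  rcases lt_trichotomy t 0 with h | h | h
  · have h' := key_pos (t := -t) (by linarith) (by linarith [ht.1])
    rw [Real.sin_neg, Real.cos_neg] at h'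
    nlinarith [h']
  · simp [h]
  · exact key_pos h ht.2

theorem z_ode_and_monotone (δ : ℝ) (hδ : δ ≤ 0) :
    let z : ℝ → ℝ := fun t => 1 + δ * xi t
    ∀ t ∈ Set.Ioo (-(π/2)) (π/2),
      (1/2) * deriv (deriv z) t * Real.cos t ^ 2
        - deriv z t * Real.cos t * Real.sin t - z t = -1 + 2 * δ * Real.cos t ^ 2 ∧
      deriv z t * Real.sin t ≤ 0 := by
  intro z t ht
  have hc : 0 < Real.cos t := Real.cos_pos_of_mem_Ioo ht
  have hcne : Real.cos t ≠ 0 := ne_of_gt hc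
  have hz : ∀ x, Real.cos x ≠ 0 → HasDerivAt z (δ * xiD x) x := fun x hx =>
    ((hasDerivAt_xi hx).const_mul δ).const_add 1
  have hdz : ∀ x, Real.cos x ≠ 0 → deriv z x = δ * xiD x := fun x hx => (hz x hx).deriv
  have hev : deriv z =ᶠ[nhds t] fun x => δ * xiD x := by
    have h : ∀ᶠ x in nhds t, Real.cos x ≠ 0 :=
      Real.continuous_cos.continuousAt.eventually_ne hcne
    exact h.mono fun x hx => hdz x hx
  have hdd : deriv (deriv z) t = δ * xiDD t := by
    rw [hev.deriv_eq]
    exact ((hasDerivAt_xiD hcne).const_mul δ).deriv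
  constructor
  · rw [hdd, hdz t hcne]
    show (1/2) * (δ * xiDD t) * Real.cos t ^ 2 - δ * xiD t * Real.cos t * Real.sin t
      - (1 + δ * xi t) = -1 + 2 * δ * Real.cos t ^ 2
    unfold xi xiD xiDD
    have hp := Real.sin_sq_add_cos_sq t
    field_simp
    linear_combination (-(16:ℝ) * δ * Real.cos t ^ 2) * hp
  · rw [hdz t hcne]
    have hG := key_ineq ht
    have hxiDs : xiD t * Real.sin t
        = 2 * (Real.sin t ^ 2 * Real.cos t ^ 2 + 2 * t * Real.sin t * Real.cos t
            + t ^ 2 * Real.sin t ^ 2 - π ^ 2 / 4 * Real.sin t ^ 2) / Real.cos t ^ 3 := by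
      unfold xiD
      field_simp
      ring
    have hpos : 0 ≤ xiD t * Real.sin t := by
      rw [hxiDs]
      apply div_nonneg (by linarith) (by positivity)
    calc δ * xiD t * Real.sin t = δ * (xiD t * Real.sin t) := by ring
      _ ≤ 0 := mul_nonpos_of_nonpos_of_nonneg hδ hpos
end
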